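/- Suppose K is a subfield of ℚ̄ closed under taking square roots, containing all roots of unity, and such that for every elliptic curve E in Weierstrass form with all 2-torsion x-coordinates in K, all x-coordinates of all torsion points of E lie in K. Then K is closed under taking cube roots. -/

import Mathlib

open WeierstrassCurve
open Classical

private lemma some_ext {F : Type*} [Field F] {W : WeierstrassCurve.Affine F}
    {x1 y1 x2 y2 : F} (h1 : W.Nonsingular x1 y1) (h2 : W.Nonsingular x2 y2)
    (hx : x1 = x2) (hy : y1 = y2) :
    WeierstrassCurve.Affine.Point.some x1 y1 h1 = WeierstrassCurve.Affine.Point.some x2 y2 h2 := by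
  subst hx; subst hy; rfl

set_option maxHeartbeats 1600000 in
/-- Suppose `K ⊆ ℚ̄` is a subfield closed under taking square roots, containing
all roots of unity, and such that for every elliptic curve in Weierstrass form all of whose
2-torsion x-coordinates lie in `K`, all x-coordinates of all torsion points lie in `K`. Then
`K` is closed under taking cube roots. -/
theorem stmt_11 (K : Subfield (AlgebraicClosure ℚ))
    (hsq : ∀ a ∈ K, ∀ b : AlgebraicClosure ℚ, b ^ 2 = a → b ∈ K)
    (hru : ∀ n : ℕ, n ≠ 0 → ∀ z : AlgebraicClosure ℚ, z ^ n = 1 → z ∈ K)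
    (htors : ∀ W : WeierstrassCurve.Affine (AlgebraicClosure ℚ),
      (∀ x y : AlgebraicClosure ℚ, ∀ h : W.Nonsingular x y,
        2 • (WeierstrassCurve.Affine.Point.some x y h) = 0 → x ∈ K) →
      ∀ x y : AlgebraicClosure ℚ, ∀ h : W.Nonsingular x y,
        IsOfFinAddOrder (WeierstrassCurve.Affine.Point.some x y h) → x ∈ K) :
    ∀ a ∈ K, ∀ b : AlgebraicClosure ℚ, b ^ 3 = a → b ∈ K := by
  set F := AlgebraicClosure ℚ with hF
  intro a ha b hb
  by_cases hb0 : b = 0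
  · exact hb0 ▸ K.zero_mem
  by_cases ha1 : a = -1
  · refine hru 6 (by norm_num) b ?_
    have : b ^ 6 = a ^ 2 := by rw [show (6 : ℕ) = 3 * 2 from rfl, pow_mul, hb]
    rw [this, ha1]; ring
  have ha0 : a ≠ 0 := fun h => hb0 (pow_eq_zero_iff (n := 3) (by norm_num) |>.mp (hb.trans h))
  set t : F := a + 1 with ht
  have ht0 : t ≠ 0 := fun h => ha1 (by rw [ht] at h; linear_combination h)
  have ht1 : t ≠ 1 := fun h => ha0 (by rw [ht] at h; linear_combination h)
  have htK : t ∈ K := K.add_mem ha K.one_mem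
  set W : WeierstrassCurve.Affine F := ⟨0, -t, 0, -t, t ^ 2⟩ with hW
  have hWa₁ : W.a₁ = 0 := rfl
  have hWa₂ : W.a₂ = -t := rfl
  have hWa₃ : W.a₃ = 0 := rfl
  have hWa₄ : W.a₄ = -t := rfl
  have hWa₆ : W.a₆ = t ^ 2 := rfl
  have hnegY : ∀ x y : F, W.negY x y = -y := by
    intro x y; rw [Affine.negY, hWa₁, hWa₃]; ring
  -- all 2-torsion x-coordinates lie in K
  have h2tors : ∀ x y : F, ∀ h : W.Nonsingular x y,
      2 • (WeierstrassCurve.Affine.Point.some x y h) = 0 → x ∈ K := by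
    intro x y h h2
    rw [two_nsmul] at h2
    have hy : y = W.negY x y := by
      by_contra hy
      rw [Affine.Point.add_self_of_Y_ne hy] at h2
      exact Affine.Point.some_ne_zero _ h2
    rw [hnegY] at hy
    have hy0 : y = 0 := by
      have h2y : (2 : F) * y = 0 := by linear_combination hy
      rcases mul_eq_zero.mp h2y with h | h
      · exact absurd h two_ne_zero
      · exact h
    have heq := (W.equation_iff x y).mp ((W.nonsingular_iff x y).mp h).1
    rw [hWa₁, hWa₂, hWa₃, hWa₄, hWa₆, hy0] at heq
    have hfac : (x - t) * (x ^ 2 - t) = 0 := by linear_combination -heq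
    rcases mul_eq_zero.mp hfac with h1 | h1
    · rw [sub_eq_zero.mp h1]; exact htK
    · exact hsq t htK x (by linear_combination h1)
  -- every root of the 3-division polynomial lies in K
  have hroot : ∀ x : F,
      3 * x ^ 4 - 4 * t * x ^ 3 - 6 * t * x ^ 2 + 12 * t ^ 2 * x - 4 * t ^ 3 - t ^ 2 = 0 →
      x ∈ K := by
    intro x hψ
    have hfne : x ^ 3 - t * x ^ 2 - t * x + t ^ 2 ≠ 0 := by
      intro hfx
      have hder : (3 * x ^ 2 - 2 * t * x - t) ^ 2 = 0 := by
        linear_combination (12 * x - 4 * t) * hfx - hψ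
      have hder' : 3 * x ^ 2 - 2 * t * x - t = 0 := by
        exact pow_eq_zero_iff (n := 2) (by norm_num) |>.mp hder
      have hfac : (x - t) * (x ^ 2 - t) = 0 := by linear_combination hfx
      rcases mul_eq_zero.mp hfac with h1 | h1
      · have hx : x = t := sub_eq_zero.mp h1
        rw [hx] at hder'
        have : t * (t - 1) = 0 := by linear_combination hder'
        rcases mul_eq_zero.mp this with h | h
        · exact ht0 h
        · exact ht1 (sub_eq_zero.mp h)
      · have hx2 : x ^ 2 = t := by linear_combination h1
        have : (2 * t) * (1 - x) = 0 := by linear_combination hder' - 3 * hx2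
        rcases mul_eq_zero.mp this with h | h
        · rcases mul_eq_zero.mp h with h' | h'
          · exact absurd h' two_ne_zero
          · exact ht0 h'
        · have hx1 : x = 1 := by linear_combination -h
          exact ht1 (by rw [← hx2, hx1]; ring)
    obtain ⟨y, hy⟩ := IsAlgClosed.exists_pow_nat_eq (k := F)
      (x ^ 3 - t * x ^ 2 - t * x + t ^ 2) (n := 2) (by norm_num)
    have hy0 : y ≠ 0 := fun h => hfne (by rw [← hy, h]; ring)
    have hEq : W.Equation x y := by
      rw [W.equation_iff x y, hWa₁, hWa₂, hWa₃, hWa₄, hWa₆]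
      linear_combination hy
    have hns : W.Nonsingular x y := by
      rw [W.nonsingular_iff x y]
      refine ⟨hEq, Or.inr fun hcon => ?_⟩
      rw [hWa₁, hWa₃] at hcon
      have h2y0 : (2 : F) * y = 0 := by linear_combination hcon
      rcases mul_eq_zero.mp h2y0 with h | h
      · exact two_ne_zero h
      · exact hy0 h
    have hYne : y ≠ W.negY x y := by
      rw [hnegY]
      intro hcon
      have h2y0 : (2 : F) * y = 0 := by linear_combination hcon
      rcases mul_eq_zero.mp h2y0 with h | h
      · exact two_ne_zero h
      · exact hy0 h
    -- slope
    set L : F := W.slope x x y y with hLdef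
    have hL : L = (3 * x ^ 2 - 2 * t * x - t) / (2 * y) := by
      rw [hLdef, Affine.slope_of_Y_ne rfl hYne, hnegY, hWa₁, hWa₂, hWa₄]
      ring
    have h2y : (2 : F) * y ≠ 0 := mul_ne_zero two_ne_zero hy0
    have hL2 : L ^ 2 = 3 * x - t := by
      rw [hL, div_pow, div_eq_iff (pow_ne_zero 2 h2y)]
      linear_combination (-(4 * (3 * x - t))) * hy - hψ
    have hXeq : W.addX x x L = x := by
      rw [Affine.addX, hWa₁, hWa₂, hL2]; ring
    have hYeq : W.addY x x y L = W.negY x y := by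
      rw [Affine.addY, Affine.negAddY, hXeq]; simp
    -- P + P = -P
    have hPP : Affine.Point.some x y hns + Affine.Point.some x y hns = -(Affine.Point.some x y hns) := by
      rw [Affine.Point.add_self_of_Y_ne hYne, Affine.Point.neg_some]
      exact some_ext _ _ hXeq hYeq
    have h3P : (3 : ℕ) • (Affine.Point.some x y hns) = 0 := by
      rw [show (3 : ℕ) = 2 + 1 from rfl, add_nsmul, two_nsmul, one_nsmul, hPP,
        neg_add_cancel]
    have hfin : IsOfFinAddOrder (Affine.Point.some x y hns) :=
      isOfFinAddOrder_iff_nsmul_eq_zero.mpr ⟨3, by norm_num, h3P⟩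
    exact htors W h2tors x y hns hfin
  -- factor the 3-division polynomial over F
  classical
  set p : Polynomial F :=
    Polynomial.C 3 * Polynomial.X ^ 4 + Polynomial.C (-4 * t) * Polynomial.X ^ 3 +
      Polynomial.C (-6 * t) * Polynomial.X ^ 2 + Polynomial.C (12 * t ^ 2) * Polynomial.X +
      Polynomial.C (-4 * t ^ 3 - t ^ 2) with hp
  have h3ne : (3 : F) ≠ 0 := by norm_num
  have hdeg : p.natDegree = 4 := by rw [hp]; compute_degree!
  have hp0 : p ≠ 0 := fun h => by simp [h] at hdeg
  have hlc : p.leadingCoeff = 3 := by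
    rw [Polynomial.leadingCoeff, hdeg, hp]
    simp only [Polynomial.coeff_add, Polynomial.coeff_C_mul, Polynomial.coeff_X_pow,
      Polynomial.coeff_X, Polynomial.coeff_C]
    norm_num
  have hsplit : p.Splits := IsAlgClosed.splits p
  have hcard : p.roots.card = 4 := (Polynomial.splits_iff_card_roots.mp hsplit).trans hdeg
  have hrne : p.roots ≠ 0 := by
    intro h
    rw [h] at hcard
    simp at hcard
  obtain ⟨x1, s, hs1⟩ : ∃ x1 s, p.roots = x1 ::ₘ s := by
    obtain ⟨x1, hx1⟩ := Multiset.exists_mem_of_ne_zero hrne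
    exact ⟨x1, _, (Multiset.exists_cons_of_mem hx1).choose_spec⟩
  have hscard : s.card = 3 := by
    have := hcard; rw [hs1, Multiset.card_cons] at this; omega
  obtain ⟨x2, x3, x4, hs2⟩ := Multiset.card_eq_three.mp hscard
  have hroots : p.roots = {x1, x2, x3, x4} := by rw [hs1, hs2]; rfl
  have hfactor := hsplit.eq_prod_roots
  rw [hlc, hroots] at hfactor
  have hpoly : ∀ v : F, 3 * (v - x1) * (v - x2) * (v - x3) * (v - x4) =
      3 * v ^ 4 - 4 * t * v ^ 3 - 6 * t * v ^ 2 + 12 * t ^ 2 * v - 4 * t ^ 3 - t ^ 2 := by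
    intro v
    have := congrArg (Polynomial.eval v) hfactor
    rw [hp] at this
    simp [Polynomial.eval_mul, Polynomial.eval_add, Polynomial.eval_pow,
      Multiset.map_cons, Multiset.map_singleton, Multiset.prod_cons,
      Multiset.prod_singleton] at this
    linear_combination -this
  -- the four roots are in K
  have hK1 : x1 ∈ K := hroot x1 (by linear_combination -hpoly x1)
  have hK2 : x2 ∈ K := hroot x2 (by linear_combination -hpoly x2)
  have hK3 : x3 ∈ K := hroot x3 (by linear_combination -hpoly x3)
  have hK4 : x4 ∈ K := hroot x4 (by linear_combination -hpoly x4)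
  -- Vieta
  have hv1 : 3 * (x1 + x2 + x3 + x4) = 4 * t := by
    linear_combination (1/12 : F) * (hpoly (-2) - hpoly 2 - 2 * hpoly (-1) + 2 * hpoly 1)
  have hv2 : x1*x2 + x1*x3 + x1*x4 + x2*x3 + x2*x4 + x3*x4 = -2 * t := by
    linear_combination (1/6 : F) * (hpoly 1 + hpoly (-1) - 2 * hpoly 0)
  have hv3 : x1*x2*x3 + x1*x2*x4 + x1*x3*x4 + x2*x3*x4 = -4 * t ^ 2 := by
    linear_combination (1/36 : F) * (8 * (hpoly (-1) - hpoly 1) - (hpoly (-2) - hpoly 2))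
  have hv4 : 3 * (x1*x2*x3*x4) = -4 * t ^ 3 - t ^ 2 := by
    linear_combination hpoly 0
  -- resolvent cubic identity
  set r : F := x1 * x2 + x3 * x4 with hr
  have hG : (3 * r + 2 * t) ^ 3 + 64 * t ^ 3 * (t - 1) ^ 2 = 0 := by
    linear_combination
      (9 * (-(x1*x2*x3 + x1*x2*x4 + x1*x3*x4 + x2*x3*x4) * r +
        (x1*x2*x3*x4) * ((x1 + x2 + x3 + x4) + 4/3 * t))) * hv1 +
      (27 * (r ^ 2 - 4 * (x1*x2*x3*x4))) * hv2 +
      (27 * (-(4/3 * t) * r + (x1*x2*x3 + x1*x2*x4 + x1*x3*x4 + x2*x3*x4) - 4 * t ^ 2)) * hv3 +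
      (9 * (4 * r + 16/9 * t ^ 2 + 8 * t)) * hv4
  have hrK : r ∈ K := K.add_mem (K.mul_mem hK1 hK2) (K.mul_mem hK3 hK4)
  -- c ∈ K is a cube root of a²
  set c : F := -(3 * r + 2 * t) / (4 * t) with hc
  have h4t : (4 : F) * t ≠ 0 := mul_ne_zero (by norm_num) ht0
  have hcK : c ∈ K := by
    refine K.div_mem (K.neg_mem (K.add_mem ?_ ?_)) ?_
    · exact K.mul_mem (ofNat_mem K 3) hrK
    · exact K.mul_mem (ofNat_mem K 2) htK
    · exact K.mul_mem (ofNat_mem K 4) htK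
  have hc3 : c ^ 3 = a ^ 2 := by
    have hta : t - 1 = a := by rw [ht]; ring
    rw [hc, div_pow, div_eq_iff (pow_ne_zero 3 h4t), ← hta]
    linear_combination -hG
  -- b² = ζ * c with ζ a cube root of unity
  have hc0 : c ≠ 0 := by
    intro h
    rw [h] at hc3
    exact ha0 (pow_eq_zero_iff (n := 2) (by norm_num) |>.mp (by rw [← hc3]; ring))
  have hzeta : (b ^ 2 / c) ^ 3 = 1 := by
    rw [div_pow, ← pow_mul, show 2 * 3 = 3 * 2 from rfl, pow_mul, hb, hc3]
    exact div_self (pow_ne_zero 2 ha0)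
  have hzK : b ^ 2 / c ∈ K := hru 3 (by norm_num) _ hzeta
  have hb2K : b ^ 2 ∈ K := by
    have := K.mul_mem hzK hcK
    rwa [div_mul_cancel₀ _ hc0] at this
  have : a / b ^ 2 ∈ K := K.div_mem ha hb2K
  rwa [show a / b ^ 2 = b from by rw [← hb]; field_simp] at this
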